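/- Let C' be an n×n real matrix that is rooted, meaning: every column of C' except the last is a rooted vector, and the row-sum vector of C' is rooted. Then the spectral radius ρ(C') is an eigenvalue of C', and C' has a rooted eigenvector v' for ρ(C'). Moreover: (i) if the last row of C' restricted to the first n−1 columns is entrywise positive, then v' is positive; (ii) if additionally r'_i > r'_n for all 1 ≤ i ≤ n−1 (where r'_i are the row-sums of C'), then v'_j > v'_n for all 1 ≤ j ≤ n−1. -/

import Mathlib

/-- Spectral radius of a real square matrix: maximum modulus of its complex eigenvalues. -/
noncomputable def specRad {n : ℕ} (A : Matrix (Fin n) (Fin n) ℝ) : ℝ :=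
  ((A.map (fun x => (x : ℂ))).charpoly.roots.map (fun z => ‖z‖)).foldr max 0

/-- A vector is rooted if every entry is at least the last entry, which is nonnegative. -/
def Rooted {n : ℕ} (v : Fin (n + 1) → ℝ) : Prop :=
  0 ≤ v (Fin.last n) ∧ ∀ j, v (Fin.last n) ≤ v j

open Matrix Polynomial


variable {K : Type*} [Field K] {m : ℕ}

lemma myEvalCharpoly (A : Matrix (Fin m) (Fin m) K) (μ : K) :
    A.charpoly.eval μ = (Matrix.diagonal (fun _ => μ) - A).det := by
  rw [Matrix.charpoly, ← Polynomial.coe_evalRingHom, RingHom.map_det]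
  congr 1
  ext i j
  by_cases h : i = j <;>
    simp [h, Matrix.charmatrix_apply, Matrix.diagonal, Matrix.map_apply]

lemma myRootIffEigen (A : Matrix (Fin m) (Fin m) K) (μ : K) :
    A.charpoly.eval μ = 0 ↔ ∃ v ≠ 0, A.mulVec v = μ • v := by
  rw [myEvalCharpoly, ← Matrix.exists_mulVec_eq_zero_iff]
  constructor
  · rintro ⟨v, hv, h⟩
    refine ⟨v, hv, ?_⟩
    have := h
    rw [Matrix.sub_mulVec] at this
    have h2 : Matrix.mulVec (Matrix.diagonal fun _ => μ) v = μ • v := by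
      ext i; simp [Matrix.mulVec_diagonal]
    rw [h2] at this
    linear_combination (norm := module) -this
  · rintro ⟨v, hv, h⟩
    refine ⟨v, hv, ?_⟩
    rw [Matrix.sub_mulVec]
    have h2 : Matrix.mulVec (Matrix.diagonal fun _ => μ) v = μ • v := by
      ext i; simp [Matrix.mulVec_diagonal]
    rw [h2, h, sub_self]



lemma myLeFoldr (s : Multiset ℝ) : ∀ a ∈ s, a ≤ s.foldr max 0 := by
  induction s using Multiset.induction_on with
  | empty => simp
  | cons b t ih =>
    intro a ha
    rw [Multiset.foldr_cons]
    rcases Multiset.mem_cons.mp ha with h | h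
    · exact h ▸ le_max_left _ _
    · exact le_trans (ih a h) (le_max_right _ _)

lemma myFoldrNonneg (s : Multiset ℝ) : 0 ≤ s.foldr max 0 := by
  induction s using Multiset.induction_on with
  | empty => simp
  | cons b t ih => rw [Multiset.foldr_cons]; exact le_trans ih (le_max_right _ _)

lemma myFoldrLe (s : Multiset ℝ) (c : ℝ) (h0 : 0 ≤ c) (h : ∀ a ∈ s, a ≤ c) :
    s.foldr max 0 ≤ c := by
  induction s using Multiset.induction_on with
  | empty => simpa
  | cons b t ih =>
    rw [Multiset.foldr_cons]
    exact max_le (h b (Multiset.mem_cons_self _ _)) (ih fun a ha => h a (Multiset.mem_cons_of_mem ha))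


def PFach {m : ℕ} (B : Matrix (Fin m) (Fin m) ℝ) (μ : ℝ) (y : Fin m → ℝ) : Prop :=
  y ∈ stdSimplex ℝ (Fin m) ∧ ∀ i, μ * y i ≤ B.mulVec y i

lemma mulVec_apply' {m : ℕ} {R : Type*} [CommRing R] (B : Matrix (Fin m) (Fin m) R)
    (y : Fin m → R) (i : Fin m) : B.mulVec y i = ∑ j, B i j * y j := rfl

lemma PFcap {m : ℕ} {B : Matrix (Fin m) (Fin m) ℝ} (hB : ∀ i j, 0 ≤ B i j)
    {μ : ℝ} {y : Fin m → ℝ} (h : PFach B μ y) : μ ≤ ∑ i, ∑ j, B i j := by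
  obtain ⟨⟨hy0, hy1⟩, hle⟩ := h
  have hyle1 : ∀ j, y j ≤ 1 := by
    intro j
    rw [← hy1]
    exact Finset.single_le_sum (fun i _ => hy0 i) (Finset.mem_univ j)
  calc μ = μ * ∑ j, y j := by rw [hy1, mul_one]
    _ = ∑ j, μ * y j := by rw [Finset.mul_sum]
    _ ≤ ∑ i, B.mulVec y i := Finset.sum_le_sum fun i _ => hle i
    _ ≤ ∑ i, ∑ j, B i j := by
        refine Finset.sum_le_sum fun i _ => ?_
        rw [mulVec_apply']
        exact Finset.sum_le_sum fun j _ =>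
          mul_le_of_le_one_right (hB i j) (hyle1 j)

lemma PFcw {m : ℕ} {B : Matrix (Fin m) (Fin m) ℝ} (hB : ∀ i j, 0 ≤ B i j)
    {z : ℂ} (hz : z ∈ (B.map (fun x => (x : ℂ))).charpoly.roots) :
    ∃ x, PFach B ‖z‖ x := by
  have hmon := (B.map (fun x => (x : ℂ))).charpoly_monic
  have hz0 : ((B.map fun x => (x:ℂ)).charpoly).eval z = 0 := (Polynomial.mem_roots hmon.ne_zero).mp hz 
  obtain ⟨u, hu, heq⟩ := (myRootIffEigen _ z).mp hz0
  set y : Fin m → ℝ := fun i => ‖u i‖ with hy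
  have hy0 : ∀ i, 0 ≤ y i := fun i => norm_nonneg _
  have hyne : ∃ i, 0 < y i := by
    by_contra hc
    push_neg at hc
    apply hu
    ext i
    have h := le_antisymm (hc i) (hy0 i)
    exact norm_eq_zero.mp h
  have hs : 0 < ∑ i, y i := by
    obtain ⟨i, hi⟩ := hyne
    exact Finset.sum_pos' (fun j _ => hy0 j) ⟨i, Finset.mem_univ i, hi⟩
  refine ⟨(∑ i, y i)⁻¹ • y, ⟨⟨fun i => mul_nonneg (inv_nonneg.mpr hs.le) (hy0 i), ?_⟩, ?_⟩⟩
  · simp only [Pi.smul_apply, smul_eq_mul, ← Finset.mul_sum]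
    field_simp
  · intro i
    have key : ‖z‖ * y i ≤ B.mulVec y i := by
      have h1 : ‖z‖ * y i = ‖z * u i‖ :=
        (norm_mul z (u i)).symm
      have h2 : z * u i = ∑ j, (B i j : ℂ) * u j := by
        have := congrFun heq i
        simpa [mulVec_apply', Matrix.map_apply, Pi.smul_apply, smul_eq_mul] using this.symm
      rw [h1, h2, mulVec_apply']
      calc ‖∑ j, (B i j : ℂ) * u j‖ ≤ ∑ j, ‖(B i j : ℂ) * u j‖ := by
            exact (norm_sum_le _ _)
        _ = ∑ j, B i j * y j := by
            refine Finset.sum_congr rfl fun j _ => ?_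
            rw [norm_mul, Complex.norm_real, Real.norm_eq_abs, abs_of_nonneg (hB i j)]
    simp only [Pi.smul_apply, smul_eq_mul]
    rw [show B.mulVec ((∑ i, y i)⁻¹ • y) = (∑ i, y i)⁻¹ • B.mulVec y from Matrix.mulVec_smul ..]
    simp only [Pi.smul_apply, smul_eq_mul]
    rw [mul_left_comm]
    exact mul_le_mul_of_nonneg_left key (by positivity)


lemma PFpos {n : ℕ} {B : Matrix (Fin (n+1)) (Fin (n+1)) ℝ} (hB : ∀ i j, 0 < B i j) :
    ∃ μ x, PFach B μ x ∧ B.mulVec x = μ • x ∧ ∀ ν y, PFach B ν y → ν ≤ μ := by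
  have hBnn : ∀ i j, 0 ≤ B i j := fun i j => (hB i j).le
  set M : ℝ := ∑ i, ∑ j, B i j with hM
  have hM0 : 0 ≤ M := Finset.sum_nonneg fun i _ => Finset.sum_nonneg fun j _ => hBnn i j
  set S : Set (ℝ × (Fin (n+1) → ℝ)) := {p | p.1 ∈ Set.Icc 0 M ∧ PFach B p.1 p.2} with hSdef
  have hx0 : (fun j => if (0 : Fin (n+1)) = j then (1:ℝ) else 0) ∈ stdSimplex ℝ (Fin (n+1)) :=
    ite_eq_mem_stdSimplex ℝ 0
  have hne : S.Nonempty := by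
    refine ⟨(0, fun j => if (0 : Fin (n+1)) = j then (1:ℝ) else 0), ⟨⟨le_refl 0, hM0⟩, hx0, ?_⟩⟩
    intro i
    rw [zero_mul, mulVec_apply']
    exact Finset.sum_nonneg fun j _ => mul_nonneg (hBnn i j) (hx0.1 j)
  have hc2 : ∀ i : Fin (n+1), Continuous fun p : ℝ × (Fin (n+1) → ℝ) => B.mulVec p.2 i := by
    intro i
    have : (fun p : ℝ × (Fin (n+1) → ℝ) => B.mulVec p.2 i)
        = fun p => ∑ j, B i j * p.2 j := by
      funext p; rw [mulVec_apply']
    rw [this]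
    exact continuous_finset_sum _ fun j _ =>
      continuous_const.mul ((continuous_apply j).comp continuous_snd)
  have hScpt : IsCompact S := by
    have hSeq : S = (Set.Icc 0 M ×ˢ stdSimplex ℝ (Fin (n+1))) ∩
        ⋂ i, {p : ℝ × (Fin (n+1) → ℝ) | p.1 * p.2 i ≤ B.mulVec p.2 i} := by
      ext p
      simp only [hSdef, Set.mem_setOf_eq, Set.mem_inter_iff, Set.mem_prod, Set.mem_iInter,
        PFach]
      tauto
    rw [hSeq]
    refine ((isCompact_Icc).prod (isCompact_stdSimplex _ _)).inter_right ?_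
    refine isClosed_iInter fun i => isClosed_le ?_ (hc2 i)
    exact continuous_fst.mul ((continuous_apply i).comp continuous_snd)
  obtain ⟨p, hpS, hpmax⟩ := hScpt.exists_isMaxOn hne continuous_fst.continuousOn
  obtain ⟨⟨hp0, hpM⟩, hxsimp, hineq⟩ := hpS
  have hmaxall : ∀ ν y, PFach B ν y → ν ≤ p.1 := by
    intro ν y hach
    rcases le_or_gt ν 0 with h | h
    · exact h.trans hp0
    · exact hpmax (Set.mem_setOf_eq ▸ ⟨⟨h.le, PFcap hBnn hach⟩, hach⟩ :
        (ν, y) ∈ S)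
  refine ⟨p.1, p.2, ⟨hxsimp, hineq⟩, ?_, hmaxall⟩
  by_contra hneq
  set y : Fin (n+1) → ℝ := fun i => B.mulVec p.2 i - p.1 * p.2 i with hydef
  have hy0 : ∀ i, 0 ≤ y i := fun i => sub_nonneg.mpr (hineq i)
  have hyne : ∃ i, 0 < y i := by
    by_contra hcon
    push_neg at hcon
    apply hneq
    funext i
    have : y i = 0 := le_antisymm (hcon i) (hy0 i)
    have := sub_eq_zero.mp this
    simpa [Pi.smul_apply, smul_eq_mul] using this
  obtain ⟨i₀, hi₀⟩ := hyne
  have hxpos : ∃ j, 0 < p.2 j := by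
    by_contra hcon
    push_neg at hcon
    have : ∑ j, p.2 j ≤ 0 := Finset.sum_nonpos fun j _ => hcon j
    rw [hxsimp.2] at this
    linarith
  obtain ⟨j₀, hj₀⟩ := hxpos
  set z : Fin (n+1) → ℝ := B.mulVec p.2 with hzdef
  have hz : ∀ i, 0 < z i := by
    intro i
    rw [hzdef, mulVec_apply']
    exact Finset.sum_pos' (fun j _ => mul_nonneg (hBnn i j) (hxsimp.1 j))
      ⟨j₀, Finset.mem_univ j₀, mul_pos (hB i j₀) hj₀⟩
  have hBy : ∀ i, 0 < B.mulVec y i := by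
    intro i
    rw [mulVec_apply']
    exact Finset.sum_pos' (fun j _ => mul_nonneg (hBnn i j) (hy0 j))
      ⟨i₀, Finset.mem_univ i₀, mul_pos (hB i i₀) hi₀⟩
  set δ : ℝ := Finset.univ.inf' Finset.univ_nonempty (fun i => B.mulVec y i / z i) with hδdef
  have hδpos : 0 < δ := by
    rw [hδdef, Finset.lt_inf'_iff]
    exact fun i _ => div_pos (hBy i) (hz i)
  have hδle : ∀ i, δ * z i ≤ B.mulVec y i := by
    intro i
    have h1 : δ ≤ B.mulVec y i / z i :=
      Finset.inf'_le _ (Finset.mem_univ i)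
    exact (le_div_iff₀ (hz i)).mp h1
  have hzsum : z = fun i => y i + p.1 * p.2 i := by
    funext i; simp [hydef, hzdef]
  have hBz : ∀ i, B.mulVec z i = B.mulVec y i + p.1 * z i := by
    intro i
    conv_lhs => rw [hzsum]
    have : (fun i => y i + p.1 * p.2 i) = y + p.1 • p.2 := by
      funext k; simp [Pi.smul_apply, smul_eq_mul]
    rw [this, Matrix.mulVec_add, Matrix.mulVec_smul]
    simp [hzdef, Pi.smul_apply, smul_eq_mul]
  have key : ∀ i, (p.1 + δ) * z i ≤ B.mulVec z i := by
    intro i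
    rw [hBz i]
    have := hδle i
    nlinarith [hz i]
  have hσ : 0 < ∑ i, z i := Finset.sum_pos (fun i _ => hz i) Finset.univ_nonempty
  have hach' : PFach B (p.1 + δ) ((∑ i, z i)⁻¹ • z) := by
    constructor
    · refine ⟨fun i => mul_nonneg (inv_nonneg.mpr hσ.le) (hz i).le, ?_⟩
      simp only [Pi.smul_apply, smul_eq_mul, ← Finset.mul_sum]
      field_simp
    · intro i
      rw [Matrix.mulVec_smul]
      simp only [Pi.smul_apply, smul_eq_mul]
      rw [mul_left_comm]
      exact mul_le_mul_of_nonneg_left (key i) (inv_nonneg.mpr hσ.le)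
  have := hmaxall _ _ hach'
  linarith


lemma specRad_nonneg {m : ℕ} (A : Matrix (Fin m) (Fin m) ℝ) : 0 ≤ specRad A :=
  myFoldrNonneg _

lemma abs_le_specRad {m : ℕ} {A : Matrix (Fin m) (Fin m) ℝ} {z : ℂ}
    (hz : z ∈ (A.map (fun x => (x : ℂ))).charpoly.roots) : ‖z‖ ≤ specRad A :=
  myLeFoldr _ _ (Multiset.mem_map_of_mem _ hz)

lemma specRad_le {m : ℕ} {A : Matrix (Fin m) (Fin m) ℝ} {c : ℝ} (h0 : 0 ≤ c)
    (h : ∀ z ∈ (A.map (fun x => (x : ℂ))).charpoly.roots, ‖z‖ ≤ c) :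
    specRad A ≤ c := by
  apply myFoldrLe _ _ h0
  intro a ha
  obtain ⟨z, hz, rfl⟩ := Multiset.mem_map.mp ha
  exact h z hz

lemma real_eig_mem_roots {m : ℕ} {A : Matrix (Fin m) (Fin m) ℝ} {lam : ℝ} {v : Fin m → ℝ}
    (hv : v ≠ 0) (h : A.mulVec v = lam • v) :
    (lam : ℂ) ∈ (A.map (fun x => (x : ℂ))).charpoly.roots := by
  have h0 : A.charpoly.eval lam = 0 := (myRootIffEigen A lam).mpr ⟨v, hv, h⟩
  have hcoe : A.map (fun x => (x : ℂ)) = A.map Complex.ofRealHom := rfl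
  have hmap : (A.map (fun x => (x : ℂ))).charpoly = A.charpoly.map Complex.ofRealHom := by
    rw [hcoe, Matrix.charpoly_map]
  rw [Polynomial.mem_roots ((A.map (fun x => (x : ℂ))).charpoly_monic.ne_zero), hmap]
  show Polynomial.eval ((Complex.ofRealHom : ℝ →+* ℂ) lam) _ = 0
  rw [Polynomial.eval_map, Polynomial.eval₂_at_apply, h0, map_zero]

lemma PFmain {n : ℕ} {B : Matrix (Fin (n+1)) (Fin (n+1)) ℝ} (hB : ∀ i j, 0 ≤ B i j) :
    ∃ x ∈ stdSimplex ℝ (Fin (n+1)), B.mulVec x = specRad B • x := by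
  set Bk : ℕ → Matrix (Fin (n+1)) (Fin (n+1)) ℝ :=
    fun k => Matrix.of fun i j => B i j + ((k:ℝ)+1)⁻¹ with hBk
  have hεpos : ∀ k : ℕ, 0 < ((k:ℝ)+1)⁻¹ := fun k => by positivity
  have hBkpos : ∀ (k : ℕ) i j, 0 < Bk k i j :=
    fun k i j => add_pos_of_nonneg_of_pos (hB i j) (hεpos k)
  choose μ x hach heq hmax using fun k => PFpos (hBkpos k)
  have hμ0 : ∀ k, 0 ≤ μ k := by
    intro k
    refine hmax k 0 (fun j => if (0 : Fin (n+1)) = j then (1:ℝ) else 0)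
      ⟨ite_eq_mem_stdSimplex ℝ 0, fun i => ?_⟩
    rw [zero_mul, mulVec_apply']
    exact Finset.sum_nonneg fun j _ =>
      mul_nonneg (hBkpos k i j).le ((ite_eq_mem_stdSimplex ℝ (0 : Fin (n+1))).1 j)
  have hlow : ∀ k, specRad B ≤ μ k := by
    intro k
    refine specRad_le (hμ0 k) fun z hz => ?_
    obtain ⟨w, hw⟩ := PFcw hB hz
    refine hmax k _ w ⟨hw.1, fun i => le_trans (hw.2 i) ?_⟩
    rw [mulVec_apply', mulVec_apply']
    refine Finset.sum_le_sum fun j _ => mul_le_mul_of_nonneg_right ?_ (hw.1.1 j)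
    simp only [hBk, Matrix.of_apply]
    linarith [hεpos k]
  set Mu : ℝ := ∑ i, ∑ j, (B i j + 1) with hMu
  have hup : ∀ k, μ k ≤ Mu := by
    intro k
    refine le_trans (PFcap (fun i j => (hBkpos k i j).le) (hach k)) ?_
    refine Finset.sum_le_sum fun i _ => Finset.sum_le_sum fun j _ => ?_
    simp only [hBk, Matrix.of_apply]
    have h1 : ((k:ℝ)+1)⁻¹ ≤ 1 := by
      rw [inv_le_one_iff₀]
      right; linarith [Nat.cast_nonneg (α := ℝ) k]
    linarith
  set K : Set (ℝ × (Fin (n+1) → ℝ)) :=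
    Set.Icc (specRad B) Mu ×ˢ stdSimplex ℝ (Fin (n+1)) with hK
  have hKc : IsCompact K := (isCompact_Icc).prod (isCompact_stdSimplex _ _)
  have hmem : ∀ k, (μ k, x k) ∈ K := fun k => ⟨⟨hlow k, hup k⟩, (hach k).1⟩
  obtain ⟨⟨lam, v⟩, hvK, φ, hφ, hlim⟩ := hKc.tendsto_subseq hmem
  have hμlim : Filter.Tendsto (fun k => μ (φ k)) Filter.atTop (nhds lam) :=
    (continuous_fst.tendsto _).comp hlim
  have hxlim : ∀ i, Filter.Tendsto (fun k => x (φ k) i) Filter.atTop (nhds (v i)) :=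
    fun i => (((continuous_apply i).comp continuous_snd).tendsto _).comp hlim
  have hεlim : Filter.Tendsto (fun k : ℕ => ((φ k : ℝ)+1)⁻¹) Filter.atTop (nhds 0) := by
    have h1 : Filter.Tendsto (fun k : ℕ => ((k : ℝ)+1)⁻¹) Filter.atTop (nhds 0) := by
      simpa only [one_div] using tendsto_one_div_add_atTop_nhds_zero_nat (𝕜 := ℝ)
    exact h1.comp hφ.tendsto_atTop
  have heqc : ∀ k i, μ k * x k i = (∑ j, B i j * x k j) + ((k:ℝ)+1)⁻¹ := by
    intro k i
    have h1 := congrFun (heq k) i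
    rw [mulVec_apply'] at h1
    have h2 : ∑ j, Bk k i j * x k j
        = (∑ j, B i j * x k j) + ((k:ℝ)+1)⁻¹ * ∑ j, x k j := by
      rw [Finset.mul_sum, ← Finset.sum_add_distrib]
      refine Finset.sum_congr rfl fun j _ => ?_
      simp only [hBk, Matrix.of_apply]
      ring
    rw [h2, (hach k).1.2, mul_one] at h1
    simp only [Pi.smul_apply, smul_eq_mul] at h1
    exact h1.symm
  have hveq : ∀ i, lam * v i = ∑ j, B i j * v j := by
    intro i
    have hL : Filter.Tendsto (fun k => μ (φ k) * x (φ k) i) Filter.atTop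
        (nhds (lam * v i)) := hμlim.mul (hxlim i)
    have hR : Filter.Tendsto (fun k => (∑ j, B i j * x (φ k) j) + ((φ k : ℝ)+1)⁻¹)
        Filter.atTop (nhds ((∑ j, B i j * v j) + 0)) := by
      refine Filter.Tendsto.add ?_ hεlim
      exact tendsto_finset_sum _ fun j _ => (hxlim j).const_mul _
    rw [add_zero] at hR
    have : (fun k => μ (φ k) * x (φ k) i)
        = fun k => (∑ j, B i j * x (φ k) j) + ((φ k : ℝ)+1)⁻¹ := by
      funext k; exact heqc (φ k) i
    rw [this] at hL
    exact tendsto_nhds_unique hL hR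
  have hvsimp : v ∈ stdSimplex ℝ (Fin (n+1)) := hvK.2
  have hvne : v ≠ 0 := by
    intro hc
    have := hvsimp.2
    rw [hc] at this
    simp at this
  have hBv : B.mulVec v = lam • v := by
    funext i
    rw [mulVec_apply', ← hveq i]
    simp [Pi.smul_apply, smul_eq_mul]
  have hlamge : specRad B ≤ lam := hvK.1.1
  have hlamle : lam ≤ specRad B := by
    have h1 := abs_le_specRad (real_eig_mem_roots hvne hBv)
    rwa [Complex.norm_real, Real.norm_eq_abs, abs_of_nonneg (le_trans (specRad_nonneg B) hlamge)] at h1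
  have hlam : lam = specRad B := le_antisymm hlamle hlamge
  exact ⟨v, hvsimp, by rw [← hlam]; exact hBv⟩


lemma charpoly_conj {m : ℕ} {R : Type*} [CommRing R] (P Q A : Matrix (Fin m) (Fin m) R)
    (hPQ : P * Q = 1) : (P * A * Q).charpoly = A.charpoly := by
  classical
  have hmapPQ : (P.map Polynomial.C) * (Q.map Polynomial.C) = 1 := by
    rw [← Matrix.map_mul, hPQ]
    ext i j
    by_cases h : i = j <;> simp [h, Matrix.one_apply]
  have key : Matrix.charmatrix (P * A * Q)
      = P.map Polynomial.C * Matrix.charmatrix A * Q.map Polynomial.C := by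
    unfold Matrix.charmatrix
    rw [Matrix.mul_sub, Matrix.sub_mul]
    congr 1
    · have hcomm : Commute (Matrix.scalar (Fin m) (Polynomial.X : R[X]))
          (P.map Polynomial.C) := by
        exact Matrix.scalar_commute _ (fun r' => Commute.all _ _) _
      rw [← hcomm.eq, Matrix.mul_assoc, hmapPQ, Matrix.mul_one]
    · simp only [RingHom.mapMatrix_apply]
      rw [← Matrix.map_mul, ← Matrix.map_mul]
  rw [Matrix.charpoly, key, Matrix.det_mul, Matrix.det_mul, Matrix.charpoly]
  have hdet : (P.map Polynomial.C).det * (Q.map Polynomial.C).det = 1 := by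
    rw [← Matrix.det_mul, hmapPQ, Matrix.det_one]
  calc (P.map Polynomial.C).det * (Matrix.charmatrix A).det * (Q.map Polynomial.C).det
      = (Matrix.charmatrix A).det * ((P.map Polynomial.C).det * (Q.map Polynomial.C).det) := by ring
    _ = (Matrix.charmatrix A).det := by rw [hdet, mul_one]


section assembly
variable {n : ℕ}

noncomputable def Pmat (n : ℕ) : Matrix (Fin (n+1)) (Fin (n+1)) ℝ :=
  Matrix.of fun i k => (if k = i then (1:ℝ) else 0) -
    (if i ≠ Fin.last n ∧ k = Fin.last n then 1 else 0)

noncomputable def Qmat (n : ℕ) : Matrix (Fin (n+1)) (Fin (n+1)) ℝ :=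
  Matrix.of fun l j => (if l = j then (1:ℝ) else 0) +
    (if j = Fin.last n ∧ l ≠ Fin.last n then 1 else 0)

lemma my_hsum (c : Fin (n+1)) (f : Fin (n+1) → ℝ) :
    ∑ k, (if k = c then (1:ℝ) else 0) * f k = f c := by
  rw [Finset.sum_eq_single c]
  · simp
  · intro b _ hb; simp [hb]
  · intro h; exact absurd (Finset.mem_univ c) h

lemma PQ_eq_one : Pmat n * Qmat n = 1 := by
  ext i j
  rw [Matrix.mul_apply]
  by_cases hi : i = Fin.last n
  · have hPi : ∀ k, Pmat n i k = if k = i then (1:ℝ) else 0 := by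
      intro k; simp [Pmat, hi]
    simp_rw [hPi, my_hsum]
    by_cases hj : j = Fin.last n
    · simp [Qmat, hi, hj, Matrix.one_apply]
    · have hj' : Fin.last n ≠ j := fun h => hj h.symm
      simp [Qmat, hi, hj, hj', Matrix.one_apply]
  · have hPi : ∀ k, Pmat n i k
        = (if k = i then (1:ℝ) else 0) - (if k = Fin.last n then 1 else 0) := by
      intro k; simp [Pmat, hi]
    simp_rw [hPi, sub_mul, Finset.sum_sub_distrib, my_hsum]
    by_cases hj : j = Fin.last n
    · simp [Qmat, hj, hi, Matrix.one_apply]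
    · have hj' : Fin.last n ≠ j := fun h => hj h.symm
      simp [Qmat, hj, hj', Matrix.one_apply]
end assembly


noncomputable def Bmat {n : ℕ} (C' : Matrix (Fin (n+1)) (Fin (n+1)) ℝ) :
    Matrix (Fin (n+1)) (Fin (n+1)) ℝ :=
  Matrix.of fun i j =>
    if i = Fin.last n then
      (if j = Fin.last n then ∑ l, C' (Fin.last n) l else C' (Fin.last n) j)
    else
      (if j = Fin.last n then (∑ l, C' i l) - ∑ l, C' (Fin.last n) l
       else C' i j - C' (Fin.last n) j)

lemma PCQ_eq_B {n : ℕ} (C' : Matrix (Fin (n+1)) (Fin (n+1)) ℝ) :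
    Pmat n * C' * Qmat n = Bmat C' := by
  have hPC : ∀ i l, (Pmat n * C') i l
      = C' i l - (if i = Fin.last n then 0 else C' (Fin.last n) l) := by
    intro i l
    rw [Matrix.mul_apply]
    by_cases hi : i = Fin.last n
    · have hPi : ∀ k, Pmat n i k = if k = i then (1:ℝ) else 0 :=
        fun k => by simp [Pmat, hi]
      simp_rw [hPi, my_hsum]
      simp [hi]
    · have hPi : ∀ k, Pmat n i k
          = (if k = i then (1:ℝ) else 0) - (if k = Fin.last n then 1 else 0) :=
        fun k => by simp [Pmat, hi]
      simp_rw [hPi, sub_mul, Finset.sum_sub_distrib, my_hsum]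
      simp [hi]
  ext i j
  rw [Matrix.mul_apply]
  simp_rw [hPC]
  by_cases hj : j = Fin.last n
  · have hQ : ∀ l, Qmat n l j = 1 := by
      intro l; by_cases hl : l = Fin.last n <;> simp [Qmat, hj, hl]
    simp_rw [hQ, mul_one]
    rw [Finset.sum_sub_distrib]
    by_cases hi : i = Fin.last n <;> simp [Bmat, hi, hj]
  · have hQ : ∀ l, Qmat n l j = if l = j then (1:ℝ) else 0 := by
      intro l; simp [Qmat, hj]
    simp_rw [hQ]
    have hflip : ∀ (f : Fin (n+1) → ℝ), ∑ l, f l * (if l = j then (1:ℝ) else 0) = f j := by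
      intro f
      rw [Finset.sum_congr rfl (fun l _ => mul_comm (f l) _), my_hsum]
    rw [hflip]
    by_cases hi : i = Fin.last n <;> simp [Bmat, hi, hj]


theorem stmt_6 {n : ℕ} (C' : Matrix (Fin (n + 1)) (Fin (n + 1)) ℝ)
    (hcol : ∀ j, j ≠ Fin.last n → Rooted (fun i => C' i j))
    (hrow : Rooted (fun i => ∑ j, C' i j)) :
    ∃ v' : Fin (n + 1) → ℝ, v' ≠ 0 ∧ Rooted v' ∧
      C'.mulVec v' = specRad C' • v' ∧
      ((∀ j, j ≠ Fin.last n → 0 < C' (Fin.last n) j) → ∀ i, 0 < v' i) ∧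
      (((∀ j, j ≠ Fin.last n → 0 < C' (Fin.last n) j) ∧
          (∀ i, i ≠ Fin.last n → ∑ j, C' (Fin.last n) j < ∑ j, C' i j)) →
        ∀ j, j ≠ Fin.last n → v' (Fin.last n) < v' j) := by
  have hr1 : 0 ≤ ∑ l, C' (Fin.last n) l := hrow.1
  have hr2 : ∀ i, ∑ l, C' (Fin.last n) l ≤ ∑ l, C' i l := hrow.2
  have hBnn : ∀ i j, 0 ≤ Bmat C' i j := by
    intro i j
    by_cases hi : i = Fin.last n <;> by_cases hj : j = Fin.last n
    · simpa [Bmat, hi, hj] using hr1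
    · simpa [Bmat, hi, hj] using (hcol j hj).1
    · simpa [Bmat, hi, hj] using hr2 i
    · simpa [Bmat, hi, hj] using (hcol j hj).2 i
  have hcp : (Bmat C').charpoly = C'.charpoly := by
    rw [← PCQ_eq_B C']
    exact charpoly_conj _ _ _ PQ_eq_one
  have hspec : specRad (Bmat C') = specRad C' := by
    have hcoe : ∀ (A : Matrix (Fin (n+1)) (Fin (n+1)) ℝ),
        A.map (fun x => (x:ℂ)) = A.map Complex.ofRealHom := fun _ => rfl
    unfold specRad
    rw [hcoe (Bmat C'), hcoe C', Matrix.charpoly_map, Matrix.charpoly_map, hcp]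
  obtain ⟨w, hwsimp, hweig⟩ := PFmain hBnn
  rw [hspec] at hweig
  have hw0 : ∀ i, 0 ≤ w i := hwsimp.1
  have hw1 : ∑ i, w i = 1 := hwsimp.2
  have hρ0 : 0 ≤ specRad C' := specRad_nonneg C'
  set v' : Fin (n+1) → ℝ := fun i =>
    if i = Fin.last n then w (Fin.last n) else w i + w (Fin.last n) with hv'
  have hcs : ∀ j : Fin n, (j.castSucc : Fin (n+1)) ≠ Fin.last n :=
    fun j => (Fin.castSucc_lt_last j).ne
  have eqB : ∀ i, ∑ j, Bmat C' i j * w j = specRad C' * w i := by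
    intro i
    have h := congrFun hweig i
    rw [mulVec_apply'] at h
    simpa using h
  have EL : (∑ j : Fin n, C' (Fin.last n) j.castSucc * w j.castSucc)
      + (∑ l, C' (Fin.last n) l) * w (Fin.last n)
      = specRad C' * w (Fin.last n) := by
    have h := eqB (Fin.last n)
    rw [Fin.sum_univ_castSucc] at h
    have hB1 : ∀ j : Fin n, Bmat C' (Fin.last n) j.castSucc = C' (Fin.last n) j.castSucc :=
      fun j => by simp [Bmat, hcs j]
    have hB2 : Bmat C' (Fin.last n) (Fin.last n) = ∑ l, C' (Fin.last n) l := by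
      simp [Bmat]
    simp_rw [hB1, hB2] at h
    exact h
  have Ei : ∀ i, i ≠ Fin.last n →
      ((∑ j : Fin n, C' i j.castSucc * w j.castSucc)
        - (∑ j : Fin n, C' (Fin.last n) j.castSucc * w j.castSucc))
      + ((∑ l, C' i l) * w (Fin.last n) - (∑ l, C' (Fin.last n) l) * w (Fin.last n))
      = specRad C' * w i := by
    intro i hi
    have h := eqB i
    rw [Fin.sum_univ_castSucc] at h
    have hB1 : ∀ j : Fin n, Bmat C' i j.castSucc
        = C' i j.castSucc - C' (Fin.last n) j.castSucc :=
      fun j => by simp [Bmat, hi, hcs j]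
    have hB2 : Bmat C' i (Fin.last n) = (∑ l, C' i l) - ∑ l, C' (Fin.last n) l := by
      simp [Bmat, hi]
    simp_rw [hB1, hB2, sub_mul] at h
    rw [Finset.sum_sub_distrib] at h
    linarith [h]
  have hvL : v' (Fin.last n) = w (Fin.last n) := by simp [hv']
  have hvc : ∀ i, i ≠ Fin.last n → v' i = w i + w (Fin.last n) :=
    fun i hi => by simp [hv', hi]
  have hwL0 : 0 ≤ w (Fin.last n) := hw0 (Fin.last n)
  -- pieces for the positivity claims
  have hwLpos : (∀ j, j ≠ Fin.last n → 0 < C' (Fin.last n) j) → 0 < w (Fin.last n) := by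
    intro hp
    rcases hwL0.lt_or_eq with h | h
    · exact h
    · exfalso
      have h0 : w (Fin.last n) = 0 := h.symm
      have hEL := EL
      rw [h0, mul_zero, mul_zero, add_zero] at hEL
      have hterms : ∀ j : Fin n, C' (Fin.last n) j.castSucc * w j.castSucc = 0 := by
        have := (Finset.sum_eq_zero_iff_of_nonneg
          (fun j _ => mul_nonneg (hp j.castSucc (hcs j)).le (hw0 j.castSucc))).mp hEL
        exact fun j => this j (Finset.mem_univ j)
      have hwz : ∀ j : Fin n, w j.castSucc = 0 := by
        intro j
        have := hterms j
        rcases mul_eq_zero.mp this with hc | hc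
        · exact absurd hc (hp j.castSucc (hcs j)).ne'
        · exact hc
      have : ∑ i, w i = 0 := by
        rw [Fin.sum_univ_castSucc, h0, add_zero]
        exact Finset.sum_eq_zero fun j _ => hwz j
      rw [hw1] at this
      exact one_ne_zero this
  refine ⟨v', ?_, ?_, ?_, ?_, ?_⟩
  · -- v' ≠ 0
    intro hc
    have h1 : ∑ i, v' i = 0 := by rw [hc]; simp
    have h2 : ∑ i, w i ≤ ∑ i, v' i := by
      refine Finset.sum_le_sum fun i _ => ?_
      by_cases hi : i = Fin.last n
      · rw [hi, hvL]
      · rw [hvc i hi]; linarith [hwL0]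
    rw [hw1] at h2
    linarith
  · -- Rooted v'
    refine ⟨by rw [hvL]; exact hwL0, fun j => ?_⟩
    by_cases hj : j = Fin.last n
    · rw [hj]
    · rw [hvL, hvc j hj]
      linarith [hw0 j]
  · -- eigen equation
    funext i
    rw [show (C'.mulVec v') i = ∑ j, C' i j * v' j from rfl]
    rw [show (specRad C' • v') i = specRad C' * v' i from rfl]
    rw [Fin.sum_univ_castSucc]
    have hexp : ∀ a : Fin (n+1),
        ∑ j : Fin n, C' a j.castSucc * v' j.castSucc
        = (∑ j : Fin n, C' a j.castSucc * w j.castSucc)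
          + (∑ j : Fin n, C' a j.castSucc) * w (Fin.last n) := by
      intro a
      rw [Finset.sum_mul, ← Finset.sum_add_distrib]
      refine Finset.sum_congr rfl fun j _ => ?_
      rw [hvc j.castSucc (hcs j)]
      ring
    have hsplitr : ∀ a : Fin (n+1), ∑ l, C' a l
        = (∑ j : Fin n, C' a j.castSucc) + C' a (Fin.last n) :=
      fun a => Fin.sum_univ_castSucc _
    have h3' : ∀ a : Fin (n+1),
        (∑ j : Fin n, C' a j.castSucc) * w (Fin.last n)
          + C' a (Fin.last n) * w (Fin.last n)
        = (∑ l, C' a l) * w (Fin.last n) := by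
      intro a
      rw [hsplitr a]
      ring
    by_cases hi : i = Fin.last n
    · subst hi
      rw [hexp (Fin.last n), hvL]
      have h2 := EL
      have h3 := h3' (Fin.last n)
      linarith
    · rw [hexp i, hvL, hvc i hi]
      have h1 := Ei i hi
      have h2 := EL
      have h3 := h3' i
      linarith
  · -- (i)
    intro hp i
    have hwL := hwLpos hp
    by_cases hi : i = Fin.last n
    · rw [hi, hvL]; exact hwL
    · rw [hvc i hi]
      have := hw0 i
      linarith
  · -- (ii)
    rintro ⟨hp, hrs⟩ j hj
    have hwL := hwLpos hp
    have hS : (∑ k : Fin n, C' (Fin.last n) k.castSucc * w k.castSucc)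
        ≤ ∑ k : Fin n, C' j k.castSucc * w k.castSucc := by
      refine Finset.sum_le_sum fun k _ => ?_
      exact mul_le_mul_of_nonneg_right ((hcol k.castSucc (hcs k)).2 j) (hw0 k.castSucc)
    have hrj : (∑ l, C' (Fin.last n) l) * w (Fin.last n)
        < (∑ l, C' j l) * w (Fin.last n) :=
      mul_lt_mul_of_pos_right (hrs j hj) hwL
    have hEj := Ei j hj
    have hpos : 0 < specRad C' * w j := by linarith
    have hwj : 0 < w j := by
      rcases (hw0 j).lt_or_eq with h | h
      · exact h
      · exfalso; rw [← h, mul_zero] at hpos; exact lt_irrefl 0 hpos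
    rw [hvL, hvc j hj]
    linarith
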